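/- Let r, s ∈ ℕ be constants and set C = (s+1)^r. For any k < n, any ε ≥ (k/n)^r, and any family F ⊆ binom([n], k), there exist a set J ⊆ [n] of size at most C and a family J' ⊆ P(J) such that: (1) for every B ∈ J', the slice F_B^B is (s, ε·(n/k)^{|B|})-uncapturable; and (2) μ(F \ (J')^↑) ≤ Cε, where (J')^↑ is the family of all k-subsets of [n] containing some member of J'. -/

import Mathlib

open Finset

lemma slice_count13 {n k : ℕ} (B₀ S : Finset (Fin n)) (G : Finset (Finset (Fin n)))
    (hG : ∀ A ∈ G, A.card = k ∧ B₀ ⊆ A ∧ A ∩ S = ∅) (hdis : Disjoint S B₀) :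
    G.card ≤ (n - B₀.card - S.card).choose (k - B₀.card) := by
  have h : G.card ≤ ((B₀ ∪ S)ᶜ.powersetCard (k - B₀.card)).card := by
    apply card_le_card_of_injOn (fun A => A \ B₀)
    · intro A hA
      obtain ⟨hcard, hsub, hint⟩ := hG A hA
      simp only [mem_coe, mem_powersetCard]
      constructor
      · intro a ha
        simp only [mem_sdiff] at ha
        simp only [mem_compl, mem_union]
        push_neg
        refine ⟨ha.2, fun haS => ?_⟩
        have : a ∈ A ∩ S := mem_inter.2 ⟨ha.1, haS⟩
        simp [hint] at this
      · rw [card_sdiff_of_subset hsub, hcard]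
    · intro A hA A' hA' h
      have h1 := (hG A hA).2.1
      have h2 := (hG A' hA').2.1
      have := congrArg (· ∪ B₀) h
      simpa [sdiff_union_of_subset h1, sdiff_union_of_subset h2] using this
  rwa [card_powersetCard, card_compl, card_union_of_disjoint hdis.symm, Fintype.card_fin,
    Nat.sub_add_eq] at h

lemma choose_ratio13 (n k b : ℕ) (hkn : k < n) (hbk : b < k) :
    n * ((n - (b+1)).choose (k - (b+1))) ≤ k * ((n - b).choose (k - b)) := by
  obtain ⟨N, hN⟩ : ∃ N, n - b = N + 1 := ⟨n - b - 1, by omega⟩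
  obtain ⟨K, hK⟩ : ∃ K, k - b = K + 1 := ⟨k - b - 1, by omega⟩
  have e1 : n - (b+1) = N := by omega
  have e2 : k - (b+1) = K := by omega
  rw [e1, e2, hN, hK]
  have hid : (N+1) * N.choose K = (N+1).choose (K+1) * (K+1) := Nat.add_one_mul_choose_eq N K
  have hn' : n = N + 1 + b := by omega
  have hk' : k = K + 1 + b := by omega
  have e3 : (K+1)*n ≤ k*(N+1) := by nlinarith [hkn.le]
  refine Nat.le_of_mul_le_mul_left ?_ (Nat.succ_pos K)
  calc (K+1) * (n * N.choose K) = ((K+1)*n) * N.choose K := by ring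
    _ ≤ (k*(N+1)) * N.choose K := Nat.mul_le_mul_right _ e3
    _ = k * ((N+1) * N.choose K) := by ring
    _ = k * ((N+1).choose (K+1) * (K+1)) := by rw [hid]
    _ = (K+1) * (k * (N+1).choose (K+1)) := by ring

open Classical in
lemma aux13 (s n k : ℕ) (hkn : k < n) :
    ∀ (r' : ℕ) (δ : ℝ) (B₀ : Finset (Fin n)) (F : Finset (Finset (Fin n))),
      (∀ A ∈ F, A.card = k ∧ B₀ ⊆ A) → ((k : ℝ) / n) ^ r' ≤ δ →
      ∃ (J : Finset (Fin n)) (J' : Finset (Finset (Fin n))),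
        J.card ≤ (s + 1) ^ r' - 1 ∧
        (∀ B ∈ J', B₀ ⊆ B ∧ B \ B₀ ⊆ J) ∧
        (∀ B ∈ J', ∀ S : Finset (Fin n), Disjoint S B → S.card ≤ s →
          ((F.filter (fun A => B ⊆ A ∧ A ∩ S = ∅)).card : ℝ)
              / ((n - B.card - S.card).choose (k - B.card)) >
            δ * ((n : ℝ) / k) ^ (B.card - B₀.card)) ∧
        ((F.filter (fun A => ∀ B ∈ J', ¬ B ⊆ A)).card : ℝ)
            / ((n - B₀.card).choose (k - B₀.card)) ≤ ((s + 1) ^ r' : ℝ) * δ := by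
  intro r'
  induction r' with
  | zero =>
    intro δ B₀ F hF hδ
    have hδ1 : (1 : ℝ) ≤ δ := by simpa using hδ
    have hC : 0 < ((n - B₀.card).choose (k - B₀.card)) :=
      Nat.choose_pos (Nat.sub_le_sub_right hkn.le _)
    refine ⟨∅, ∅, by simp, by simp, by simp, ?_⟩
    have hfe : F.filter (fun A => ∀ B ∈ (∅ : Finset (Finset (Fin n))), ¬ B ⊆ A) = F := by
      apply filter_true_of_mem; intro A _; simp
    rw [hfe]
    have hcount : F.card ≤ (n - B₀.card - (0:ℕ)).choose (k - B₀.card) := by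
      have := slice_count13 B₀ ∅ F (fun A hA => ⟨(hF A hA).1, (hF A hA).2, by simp⟩)
        (disjoint_bot_left)
      simpa using this
    rw [div_le_iff₀ (by exact_mod_cast hC)]
    simp only [pow_zero, one_mul]
    calc (F.card : ℝ) ≤ ((n - B₀.card).choose (k - B₀.card) : ℝ) := by
          exact_mod_cast (by simpa using hcount)
      _ = 1 * _ := (one_mul _).symm
      _ ≤ δ * _ := by apply mul_le_mul_of_nonneg_right hδ1 (by positivity)
  | succ m ih =>
    intro δ B₀ F hF hδ
    have hδ0 : 0 ≤ δ := le_trans (by positivity) hδ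
    have hC1 : 0 < ((n - B₀.card).choose (k - B₀.card)) :=
      Nat.choose_pos (Nat.sub_le_sub_right hkn.le _)
    by_cases hcap : ∃ S : Finset (Fin n), Disjoint S B₀ ∧ S.card ≤ s ∧
        ((F.filter (fun A => B₀ ⊆ A ∧ A ∩ S = ∅)).card : ℝ)
          / ((n - B₀.card - S.card).choose (k - B₀.card)) ≤ δ
    · obtain ⟨S, hSB, hScard, hSbound⟩ := hcap
      by_cases hbk : k ≤ B₀.card
      · -- degenerate: every A ∈ F equals B₀
        have hkb0 : k - B₀.card = 0 := Nat.sub_eq_zero_of_le hbk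
        have hFS : F.filter (fun A => B₀ ⊆ A ∧ A ∩ S = ∅) = F := by
          apply filter_true_of_mem
          intro A hA
          obtain ⟨hAc, hAs⟩ := hF A hA
          have hAB : A = B₀ :=
            (Finset.eq_of_subset_of_card_le hAs (by rw [hAc]; exact hbk)).symm
          refine ⟨hAs, ?_⟩
          rw [hAB, ← disjoint_iff_inter_eq_empty]
          exact hSB.symm
        refine ⟨∅, ∅, by simp, by simp, by simp, ?_⟩
        have hfe : F.filter (fun A => ∀ B ∈ (∅ : Finset (Finset (Fin n))), ¬ B ⊆ A) = F := by
          apply filter_true_of_mem; intro A _; simp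
        rw [hfe]
        rw [hFS, hkb0] at hSbound
        simp only [Nat.choose_zero_right, Nat.cast_one, div_one] at hSbound
        rw [hkb0]
        simp only [Nat.choose_zero_right, Nat.cast_one, div_one]
        calc (F.card : ℝ) ≤ δ := hSbound
          _ = 1 * δ := (one_mul δ).symm
          _ ≤ ((s+1)^(m+1) : ℝ) * δ := by
              apply mul_le_mul_of_nonneg_right _ hδ0
              exact one_le_pow₀ (by norm_num)
      · -- recursive case
        have hbk' : B₀.card < k := lt_of_not_ge hbk
        have hk0 : (0:ℕ) < k := by omega
        have hn0 : (0:ℕ) < n := by omega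
        have hkR : (0:ℝ) < k := by exact_mod_cast hk0
        have hnR : (0:ℝ) < n := by exact_mod_cast hn0
        set δ' := δ * ((n : ℝ) / k) with hδ'def
        have hδ' : ((k : ℝ) / n) ^ m ≤ δ' := by
          have he : ((k : ℝ) / n) ^ (m+1) * ((n : ℝ) / k) = ((k : ℝ) / n) ^ m := by
            rw [pow_succ]
            field_simp
          calc ((k : ℝ) / n) ^ m = ((k : ℝ) / n) ^ (m+1) * ((n : ℝ) / k) := he.symm
            _ ≤ δ * ((n : ℝ) / k) := by
                apply mul_le_mul_of_nonneg_right hδ (by positivity)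
        have key : ∀ x ∈ S, ∃ (J : Finset (Fin n)) (J' : Finset (Finset (Fin n))),
            J.card ≤ (s + 1) ^ m - 1 ∧
            (∀ B ∈ J', insert x B₀ ⊆ B ∧ B \ insert x B₀ ⊆ J) ∧
            (∀ B ∈ J', ∀ S' : Finset (Fin n), Disjoint S' B → S'.card ≤ s →
              (((F.filter (fun A => x ∈ A)).filter (fun A => B ⊆ A ∧ A ∩ S' = ∅)).card : ℝ)
                  / ((n - B.card - S'.card).choose (k - B.card)) >
                δ' * ((n : ℝ) / k) ^ (B.card - (insert x B₀).card)) ∧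
            (((F.filter (fun A => x ∈ A)).filter (fun A => ∀ B ∈ J', ¬ B ⊆ A)).card : ℝ)
                / ((n - (insert x B₀).card).choose (k - (insert x B₀).card)) ≤
              ((s + 1) ^ m : ℝ) * δ' := by
          intro x hx
          apply ih δ' (insert x B₀) (F.filter (fun A => x ∈ A))
          · intro A hA
            rw [mem_filter] at hA
            exact ⟨(hF A hA.1).1, insert_subset hA.2 (hF A hA.1).2⟩
          · exact hδ'
        choose! Jf J'f hJcard hJsub hJslice hJrem using key
        have hxnB : ∀ x ∈ S, x ∉ B₀ := fun x hx => disjoint_left.mp hSB hx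
        have hins : ∀ x ∈ S, (insert x B₀).card = B₀.card + 1 := fun x hx =>
          card_insert_of_notMem (hxnB x hx)
        refine ⟨S ∪ S.biUnion Jf, S.biUnion J'f, ?_, ?_, ?_, ?_⟩
        · -- cardinality
          have hsum : ∑ x ∈ S, (Jf x).card ≤ s * ((s+1)^m - 1) := by
            calc ∑ x ∈ S, (Jf x).card ≤ ∑ _x ∈ S, ((s+1)^m - 1) :=
                  sum_le_sum (fun x hx => hJcard x hx)
              _ = S.card * ((s+1)^m - 1) := by rw [sum_const, smul_eq_mul]
              _ ≤ s * ((s+1)^m - 1) := Nat.mul_le_mul_right _ hScard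
          have harith : s + s * ((s+1)^m - 1) ≤ (s+1)^(m+1) - 1 := by
            obtain ⟨u, hu⟩ : ∃ u, (s+1)^m = u + 1 :=
              ⟨(s+1)^m - 1, by have := Nat.one_le_pow m (s+1) (by omega); omega⟩
            rw [pow_succ, hu]
            simp only [Nat.add_sub_cancel]
            have : (u+1) * (s+1) = s*u + u + s + 1 := by ring
            omega
          calc (S ∪ S.biUnion Jf).card ≤ S.card + (S.biUnion Jf).card := card_union_le _ _
            _ ≤ S.card + ∑ x ∈ S, (Jf x).card := by
                exact Nat.add_le_add_left (card_biUnion_le) _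
            _ ≤ s + s * ((s+1)^m - 1) := Nat.add_le_add hScard hsum
            _ ≤ (s+1)^(m+1) - 1 := harith
        · -- structure of J'
          intro B hB
          rw [mem_biUnion] at hB
          obtain ⟨x, hx, hBx⟩ := hB
          obtain ⟨hBsub, hBJ⟩ := hJsub x hx B hBx
          refine ⟨(subset_insert x B₀).trans hBsub, ?_⟩
          intro a ha
          rw [mem_sdiff] at ha
          by_cases hax : a = x
          · exact mem_union_left _ (hax ▸ hx)
          · refine mem_union_right _ (mem_biUnion.2 ⟨x, hx, hBJ ?_⟩)
            rw [mem_sdiff, mem_insert]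
            exact ⟨ha.1, fun h => h.elim hax ha.2⟩
        · -- slice condition
          intro B hB S' hS' hS'card
          rw [mem_biUnion] at hB
          obtain ⟨x, hx, hBx⟩ := hB
          obtain ⟨hBsub, _⟩ := hJsub x hx B hBx
          have hxB : x ∈ B := hBsub (mem_insert_self x B₀)
          have heq : F.filter (fun A => B ⊆ A ∧ A ∩ S' = ∅) =
              (F.filter (fun A => x ∈ A)).filter (fun A => B ⊆ A ∧ A ∩ S' = ∅) := by
            rw [filter_filter]
            apply filter_congr
            intro A _
            constructor
            · exact fun h => ⟨h.1 hxB, h⟩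
            · exact fun h => h.2
          have hkey := hJslice x hx B hBx S' hS' hS'card
          have hle : B₀.card + 1 ≤ B.card := by
            have := card_le_card hBsub
            rwa [hins x hx] at this
          have hexp : δ * ((n : ℝ) / k) ^ (B.card - B₀.card) =
              δ' * ((n : ℝ) / k) ^ (B.card - (insert x B₀).card) := by
            rw [hins x hx]
            have h1 : B.card - B₀.card = (B.card - (B₀.card + 1)) + 1 := by omega
            rw [h1, pow_succ, hδ'def]
            ring
          rw [heq, hexp]
          exact hkey
        · -- remainder bound
          have hC2 : 0 < ((n - (B₀.card+1)).choose (k - (B₀.card+1))) :=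
            Nat.choose_pos (Nat.sub_le_sub_right hkn.le _)
          have hC1R : (0:ℝ) < ((n - B₀.card).choose (k - B₀.card) : ℝ) := by exact_mod_cast hC1
          have hC2R : (0:ℝ) < ((n - (B₀.card+1)).choose (k - (B₀.card+1)) : ℝ) := by
            exact_mod_cast hC2
          set FS := F.filter (fun A => B₀ ⊆ A ∧ A ∩ S = ∅) with hFSdef
          set Rx := fun x => (F.filter (fun A => x ∈ A)).filter (fun A => ∀ B ∈ J'f x, ¬ B ⊆ A)
            with hRxdef
          have hsubR : F.filter (fun A => ∀ B ∈ S.biUnion J'f, ¬ B ⊆ A) ⊆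
              FS ∪ S.biUnion Rx := by
            intro A hA
            rw [mem_filter] at hA
            obtain ⟨hAF, hAav⟩ := hA
            by_cases hAS : A ∩ S = ∅
            · exact mem_union_left _ (mem_filter.2 ⟨hAF, (hF A hAF).2, hAS⟩)
            · obtain ⟨x, hxmem⟩ := nonempty_iff_ne_empty.2 hAS
              rw [mem_inter] at hxmem
              refine mem_union_right _ (mem_biUnion.2 ⟨x, hxmem.2,
                mem_filter.2 ⟨mem_filter.2 ⟨hAF, hxmem.1⟩, ?_⟩⟩)
              intro B hB
              exact hAav B (mem_biUnion.2 ⟨x, hxmem.2, hB⟩)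
          have hcard1 : (FS.card : ℝ) ≤ δ * ((n - B₀.card).choose (k - B₀.card) : ℝ) := by
            have hcnt : FS.card ≤ (n - B₀.card - S.card).choose (k - B₀.card) := by
              apply slice_count13 B₀ S FS _ hSB
              intro A hA
              rw [hFSdef, mem_filter] at hA
              exact ⟨(hF A hA.1).1, hA.2.1, hA.2.2⟩
            rcases Nat.eq_zero_or_pos ((n - B₀.card - S.card).choose (k - B₀.card)) with h0|hpos
            · have hz : FS.card = 0 := by omega
              rw [hz]
              simp only [Nat.cast_zero]
              positivity
            · rw [div_le_iff₀ (by exact_mod_cast hpos)] at hSbound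
              calc (FS.card : ℝ) ≤ δ * ((n - B₀.card - S.card).choose (k - B₀.card) : ℝ) :=
                    hSbound
                _ ≤ δ * ((n - B₀.card).choose (k - B₀.card) : ℝ) := by
                    apply mul_le_mul_of_nonneg_left _ hδ0
                    exact_mod_cast Nat.choose_le_choose _ (Nat.sub_le _ _)
          have hratio : ((n:ℝ)/k) * ((n - (B₀.card+1)).choose (k - (B₀.card+1)) : ℝ) ≤
              ((n - B₀.card).choose (k - B₀.card) : ℝ) := by
            rw [div_mul_eq_mul_div, div_le_iff₀ hkR]
            have := choose_ratio13 n k B₀.card hkn hbk'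
            calc (n:ℝ) * ((n - (B₀.card+1)).choose (k - (B₀.card+1)) : ℝ)
                = ((n * ((n - (B₀.card+1)).choose (k - (B₀.card+1))) : ℕ) : ℝ) := by push_cast; ring
              _ ≤ ((k * ((n - B₀.card).choose (k - B₀.card)) : ℕ) : ℝ) := by exact_mod_cast this
              _ = ((n - B₀.card).choose (k - B₀.card) : ℝ) * k := by push_cast; ring
          have hcardx : ∀ x ∈ S, ((Rx x).card : ℝ) ≤
              ((s+1)^m : ℝ) * δ * ((n - B₀.card).choose (k - B₀.card) : ℝ) := by
            intro x hx
            have h := hJrem x hx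
            rw [hins x hx] at h
            rw [div_le_iff₀ hC2R] at h
            calc ((Rx x).card : ℝ) ≤ ((s+1)^m : ℝ) * δ' *
                  ((n - (B₀.card+1)).choose (k - (B₀.card+1)) : ℝ) := h
              _ = ((s+1)^m : ℝ) * δ *
                  (((n:ℝ)/k) * ((n - (B₀.card+1)).choose (k - (B₀.card+1)) : ℝ)) := by
                  rw [hδ'def]; ring
              _ ≤ ((s+1)^m : ℝ) * δ * ((n - B₀.card).choose (k - B₀.card) : ℝ) := by
                  apply mul_le_mul_of_nonneg_left hratio (by positivity)
          rw [div_le_iff₀ hC1R]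
          calc ((F.filter (fun A => ∀ B ∈ S.biUnion J'f, ¬ B ⊆ A)).card : ℝ)
              ≤ ((FS ∪ S.biUnion Rx).card : ℝ) := by exact_mod_cast card_le_card hsubR
            _ ≤ (FS.card : ℝ) + ((S.biUnion Rx).card : ℝ) := by
                exact_mod_cast card_union_le _ _
            _ ≤ (FS.card : ℝ) + ∑ x ∈ S, ((Rx x).card : ℝ) := by
                apply add_le_add le_rfl
                exact_mod_cast card_biUnion_le
            _ ≤ δ * ((n - B₀.card).choose (k - B₀.card) : ℝ) +
                ∑ _x ∈ S, (((s+1)^m : ℝ) * δ * ((n - B₀.card).choose (k - B₀.card) : ℝ)) :=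
                add_le_add hcard1 (sum_le_sum hcardx)
            _ = δ * ((n - B₀.card).choose (k - B₀.card) : ℝ) +
                (S.card : ℝ) * (((s+1)^m : ℝ) * δ * ((n - B₀.card).choose (k - B₀.card) : ℝ)) := by
                rw [sum_const, nsmul_eq_mul]
            _ ≤ δ * ((n - B₀.card).choose (k - B₀.card) : ℝ) +
                (s : ℝ) * (((s+1)^m : ℝ) * δ * ((n - B₀.card).choose (k - B₀.card) : ℝ)) := by
                apply add_le_add le_rfl
                apply mul_le_mul_of_nonneg_right (by exact_mod_cast hScard) (by positivity)
            _ = (1 + (s:ℝ) * ((s:ℝ)+1)^m) * (δ * ((n - B₀.card).choose (k - B₀.card) : ℝ)) := by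
                push_cast; ring
            _ ≤ (((s:ℝ)+1)^(m+1)) * (δ * ((n - B₀.card).choose (k - B₀.card) : ℝ)) := by
                apply mul_le_mul_of_nonneg_right _ (by positivity)
                have h1 : (1:ℝ) ≤ ((s:ℝ)+1)^m := one_le_pow₀ (by norm_num)
                have h2 : ((s:ℝ)+1)^(m+1) = ((s:ℝ)+1)^m * ((s:ℝ)+1) := pow_succ _ _
                nlinarith
            _ = ((s+1)^(m+1) : ℝ) * δ * ((n - B₀.card).choose (k - B₀.card) : ℝ) := by
                push_cast; ring
    · -- uncapturable : take J' = {B₀}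
      push_neg at hcap
      refine ⟨∅, {B₀}, by simp, by simp, ?_, ?_⟩
      · intro B hB S hS hScard
        rw [mem_singleton] at hB
        subst hB
        simpa using hcap S hS hScard
      · have hfe : F.filter (fun A => ∀ B ∈ ({B₀} : Finset (Finset (Fin n))), ¬ B ⊆ A) = ∅ := by
          rw [filter_eq_empty_iff]
          intro A hA h
          exact h B₀ (mem_singleton_self _) (hF A hA).2
        rw [hfe]
        simp only [card_empty, Nat.cast_zero, zero_div]
        positivity

open Classical in
theorem stmt13 (r s : ℕ) (n k : ℕ) (ε : ℝ) (F : Finset (Finset (Fin n)))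
    (hkn : k < n) (hε : ((k : ℝ) / n) ^ r ≤ ε) (hF : ∀ A ∈ F, A.card = k) :
    ∃ (J : Finset (Fin n)) (J' : Finset (Finset (Fin n))),
      J.card ≤ (s + 1) ^ r ∧ (∀ B ∈ J', B ⊆ J) ∧
      (∀ B ∈ J', ∀ S : Finset (Fin n), Disjoint S B → S.card ≤ s →
        ((F.filter (fun A => B ⊆ A ∧ A ∩ S = ∅)).card : ℝ)
            / ((n - B.card - S.card).choose (k - B.card)) >
          ε * ((n : ℝ) / k) ^ B.card) ∧
      ((F.filter (fun A => ∀ B ∈ J', ¬ B ⊆ A)).card : ℝ) / (n.choose k) ≤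
        ((s + 1) ^ r : ℝ) * ε := by
  obtain ⟨J, J', hJcard, hJsub, hJslice, hJrem⟩ :=
    aux13 s n k hkn r ε ∅ F (fun A hA => ⟨hF A hA, empty_subset A⟩) hε
  refine ⟨J, J', hJcard.trans (Nat.sub_le _ _), ?_, ?_, ?_⟩
  · intro B hB
    have := (hJsub B hB).2
    simpa using this
  · intro B hB S hS hScard
    have := hJslice B hB S hS hScard
    simpa using this
  · simpa using hJrem
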